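/- Let α be the interval-valued function on ℝ defined by α(x) = [−1, −1] for x < 0, α(0) = [−1, 1], and α(x) = [1, 1] for x > 0. Define the interval-valued function β on ℝ² by β(x, y) = α(sin(1/(x² + y²))) for (x, y) ≠ (0, 0) and β(0, 0) = [−1, 1]. Then β is Hausdorff-continuous. -/

import Mathlib

open Filter Topology

/-- The lower Baire operator: `I(g)(x)` is the sup over neighbourhoods `V` of `x`
of the inf of `g` over `V`. -/
noncomputable def lowerBaire {X : Type*} [TopologicalSpace X] (g : X → EReal) (x : X) : EReal :=
  ⨆ V ∈ nhds x, ⨅ y ∈ V, g y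

/-- The upper Baire operator: `S(g)(x)` is the inf over neighbourhoods `V` of `x`
of the sup of `g` over `V`. -/
noncomputable def upperBaire {X : Type*} [TopologicalSpace X] (g : X → EReal) (x : X) : EReal :=
  ⨅ V ∈ nhds x, ⨆ y ∈ V, g y

/-- The pair `(lo, hi)` is an interval-valued function (`lo ≤ hi` pointwise) which is
segment-continuous: `I(lo) = lo` and `S(hi) = hi`. -/
def IsSCont {X : Type*} [TopologicalSpace X] (lo hi : X → EReal) : Prop :=
  (∀ x, lo x ≤ hi x) ∧ lowerBaire lo = lo ∧ upperBaire hi = hi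

/-- The pair `(lo, hi)` is a Hausdorff-continuous interval-valued function: it is
s-continuous and minimal among s-continuous interval-valued functions `(glo, ghi)`
contained in it pointwise. -/
def IsHCont {X : Type*} [TopologicalSpace X] (lo hi : X → EReal) : Prop :=
  IsSCont lo hi ∧
    ∀ glo ghi : X → EReal, IsSCont glo ghi →
      (∀ x, lo x ≤ glo x) → (∀ x, ghi x ≤ hi x) → glo = lo ∧ ghi = hi

private lemma beta_sin_signs_near {a δ : ℝ} (ha : 0 < a) (hs : Real.sin a = 0) (hδ : 0 < δ) :
    (∃ θ, 0 < θ ∧ |θ - a| < δ ∧ 0 < Real.sin θ) ∧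
    (∃ θ, 0 < θ ∧ |θ - a| < δ ∧ Real.sin θ < 0) := by
  obtain ⟨n, hn⟩ := Real.sin_eq_zero_iff.mp hs
  have hπ := Real.pi_pos
  have hn1 : (1 : ℤ) ≤ n := by
    by_contra h
    push_neg at h
    have : (n : ℝ) ≤ 0 := by exact_mod_cast (by omega : n ≤ 0)
    nlinarith
  have haπ : Real.pi ≤ a := by
    rw [← hn]
    nlinarith [(by exact_mod_cast hn1 : (1:ℝ) ≤ (n:ℝ))]
  set u : ℝ := min (δ/2) (Real.pi/2) with hu
  have hu0 : 0 < u := lt_min (by linarith) (by linarith)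
  have huπ : u < Real.pi := (min_le_right _ _).trans_lt (by linarith)
  have huδ : u < δ := (min_le_left _ _).trans_lt (by linarith)
  have hsinu : 0 < Real.sin u := Real.sin_pos_of_pos_of_lt_pi hu0 huπ
  have hp : Real.sin (a + u) = (-1)^n * Real.sin u := by
    rw [show a + u = u + n * Real.pi by rw [hn]; ring, Real.sin_add_int_mul_pi]
  have hm : Real.sin (a - u) = -((-1)^n * Real.sin u) := by
    rw [show a - u = -u + n * Real.pi by rw [hn]; ring, Real.sin_add_int_mul_pi,
      Real.sin_neg]; ring
  have hap : 0 < a + u := by linarith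
  have ham : 0 < a - u := by linarith
  have hdp : |a + u - a| < δ := by rw [show a + u - a = u by ring, abs_of_pos hu0]; exact huδ
  have hdm : |a - u - a| < δ := by
    rw [show a - u - a = -u by ring, abs_neg, abs_of_pos hu0]; exact huδ
  rcases Int.even_or_odd n with he | ho
  · rw [he.neg_one_zpow] at hp hm
    exact ⟨⟨a + u, hap, hdp, by rw [hp]; linarith⟩, ⟨a - u, ham, hdm, by rw [hm]; linarith⟩⟩
  · rw [ho.neg_one_zpow] at hp hm
    exact ⟨⟨a - u, ham, hdm, by rw [hm]; linarith⟩, ⟨a + u, hap, hdp, by rw [hp]; linarith⟩⟩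

private lemma beta_dense_signs(p : ℝ × ℝ) (hp : p = 0 ∨ Real.sin (1/(p.1^2+p.2^2)) = 0)
    {V : Set (ℝ × ℝ)} (hV : V ∈ nhds p) :
    (∃ q ∈ V, q ≠ 0 ∧ 0 < Real.sin (1/(q.1^2+q.2^2))) ∧
    (∃ q ∈ V, q ≠ 0 ∧ Real.sin (1/(q.1^2+q.2^2)) < 0) := by
  by_cases hp0 : p = 0
  · -- p = 0
    subst hp0
    obtain ⟨ε, hε, hball⟩ := Metric.mem_nhds_iff.mp hV
    obtain ⟨n, hn⟩ := exists_nat_gt (1/ε^2)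
    set m : ℕ := n + 1 with hm
    have hm1 : (1:ℝ) ≤ (m:ℝ) := by exact_mod_cast Nat.le_add_left 1 n
    have hmε : 1/ε^2 < (m:ℝ) := by rw [hm]; push_cast; linarith
    have hπ := Real.pi_gt_three
    set a : ℝ := (2*m : ℕ) * Real.pi with ha
    have ha0 : 0 < a := by
      rw [ha]; push_cast; nlinarith
    have hsa : Real.sin a = 0 := Real.sin_nat_mul_pi (2*m)
    have key : ∀ θ : ℝ, 0 < θ → |θ - a| < 1 →
        ∃ q ∈ V, q ≠ 0 ∧ 1/(q.1^2+q.2^2) = θ := by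
      intro θ hθ hd
      have hθbig : 1/ε^2 < θ := by
        have : a - 1 < θ := by
          have := abs_lt.mp hd; linarith [this.1]
        rw [ha] at this; push_cast at this; nlinarith
      refine ⟨(Real.sqrt (1/θ), 0), ?_, ?_, ?_⟩
      · apply hball
        have hlt : Real.sqrt (1/θ) < ε := by
          rw [Real.sqrt_lt' hε]
          rw [div_lt_iff₀ hθ]
          rw [div_lt_iff₀ (by positivity : (0:ℝ) < ε^2)] at hθbig
          nlinarith
        rw [Metric.mem_ball, Prod.dist_eq]
        refine max_lt ?_ ?_
        · simpa [Real.dist_eq, abs_of_nonneg (Real.sqrt_nonneg (1/θ)), abs_of_nonneg (Real.sqrt_nonneg θ)] using hlt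
        · simpa using hε
      · intro h
        have : Real.sqrt (1/θ) = 0 := congrArg Prod.fst h
        rw [Real.sqrt_eq_zero (by positivity)] at this
        have : (0:ℝ) < 1/θ := by positivity
        linarith [this]
      · simp only
        rw [Real.sq_sqrt (by positivity : (0:ℝ) ≤ 1/θ)]
        norm_num
    constructor
    · obtain ⟨θ, h0, hd, hsgn⟩ := (beta_sin_signs_near ha0 hsa one_pos).1
      obtain ⟨q, hqV, hq0, hqθ⟩ := key θ h0 hd
      exact ⟨q, hqV, hq0, by rw [hqθ]; exact hsgn⟩
    · obtain ⟨θ, h0, hd, hsgn⟩ := (beta_sin_signs_near ha0 hsa one_pos).2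
      obtain ⟨q, hqV, hq0, hqθ⟩ := key θ h0 hd
      exact ⟨q, hqV, hq0, by rw [hqθ]; exact hsgn⟩
  · -- p ≠ 0
    have hp' : Real.sin (1/(p.1^2+p.2^2)) = 0 := hp.resolve_left hp0
    have hc : 0 < p.1^2 + p.2^2 := by
      rcases lt_or_eq_of_le (by positivity : (0:ℝ) ≤ p.1^2 + p.2^2) with h | h
      · exact h
      · exfalso
        apply hp0
        have h1 : p.1 = 0 := by nlinarith [sq_nonneg p.1, sq_nonneg p.2]
        have h2 : p.2 = 0 := by nlinarith [sq_nonneg p.1, sq_nonneg p.2]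
        exact Prod.ext h1 h2
    set c : ℝ := p.1^2 + p.2^2 with hcdef
    set a : ℝ := 1/c with hadef
    have ha0 : 0 < a := by positivity
    set F : ℝ → ℝ × ℝ := fun θ => (Real.sqrt (1/(θ*c))) • p with hFdef
    have hFa : F a = p := by
      have : a * c = 1 := by rw [hadef]; field_simp
      rw [hFdef]; simp only [this]; norm_num
    have hFcont : ContinuousAt F a := by
      have h1 : ContinuousAt (fun θ : ℝ => 1/(θ*c)) a :=
        ContinuousAt.div continuousAt_const (continuousAt_id.mul continuousAt_const)
          (by rw [hadef]; field_simp; norm_num)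
      exact ((Real.continuous_sqrt.continuousAt.comp h1).smul continuousAt_const)
    have hpre : F ⁻¹' V ∈ nhds a := hFcont.preimage_mem_nhds (by rwa [hFa])
    obtain ⟨δ, hδ, hball⟩ := Metric.mem_nhds_iff.mp hpre
    have key : ∀ θ : ℝ, 0 < θ → |θ - a| < δ →
        ∃ q ∈ V, q ≠ 0 ∧ 1/(q.1^2+q.2^2) = θ := by
      intro θ hθ hd
      have hr2 : (F θ).1^2 + (F θ).2^2 = 1/θ := by
        have hs : Real.sqrt (1/(θ*c)) ^ 2 = 1/(θ*c) := Real.sq_sqrt (by positivity)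
        have h3 : (Real.sqrt (1/(θ*c)) * p.1)^2 + (Real.sqrt (1/(θ*c)) * p.2)^2
            = (1/(θ*c)) * (p.1^2 + p.2^2) := by
          linear_combination (p.1^2 + p.2^2) * hs
        rw [hFdef]
        simp only [Prod.smul_fst, Prod.smul_snd, smul_eq_mul]
        rw [h3, ← hcdef]
        field_simp
      refine ⟨F θ, hball (by rwa [Metric.mem_ball, Real.dist_eq]), ?_, ?_⟩
      · intro h
        have h2 : (0:ℝ) = 1/θ := by rw [h] at hr2; simpa using hr2
        have h4 : (0:ℝ) < 1/θ := by positivity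
        linarith
      · rw [hr2]; norm_num
    constructor
    · obtain ⟨θ, h0, hd, hsgn⟩ := (beta_sin_signs_near ha0 hp' hδ).1
      obtain ⟨q, hqV, hq0, hqθ⟩ := key θ h0 hd
      exact ⟨q, hqV, hq0, by rw [hqθ]; exact hsgn⟩
    · obtain ⟨θ, h0, hd, hsgn⟩ := (beta_sin_signs_near ha0 hp' hδ).2
      obtain ⟨q, hqV, hq0, hqθ⟩ := key θ h0 hd
      exact ⟨q, hqV, hq0, by rw [hqθ]; exact hsgn⟩

private lemma beta_elt : (-1:EReal) < 1 := by
  rw [show (-1:EReal) = ((-1:ℝ):EReal) by norm_num, show (1:EReal) = ((1:ℝ):EReal) by norm_num,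
    EReal.coe_lt_coe_iff]
  norm_num

private lemma beta_ele : (-1:EReal) ≤ 1 := beta_elt.le

private lemma beta_r2_pos {p : ℝ × ℝ} (hp : p ≠ 0) : 0 < p.1^2 + p.2^2 := by
  rcases lt_or_eq_of_le (by positivity : (0:ℝ) ≤ p.1^2 + p.2^2) with h | h
  · exact h
  · exfalso
    apply hp
    have h1 : p.1 = 0 := by nlinarith [sq_nonneg p.1, sq_nonneg p.2]
    have h2 : p.2 = 0 := by nlinarith [sq_nonneg p.1, sq_nonneg p.2]
    exact Prod.ext h1 h2

private lemma beta_contOn : ContinuousOn (fun q : ℝ × ℝ => Real.sin (1/(q.1^2+q.2^2)))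
    {(0 : ℝ × ℝ)}ᶜ := by
  apply Real.continuous_sin.comp_continuousOn
  apply ContinuousOn.div continuousOn_const
  · exact ((continuous_fst.pow 2).add (continuous_snd.pow 2)).continuousOn
  · intro q hq
    exact (beta_r2_pos (by simpa using hq)).ne'

private lemma beta_open_pos :
    IsOpen {q : ℝ × ℝ | q ≠ 0 ∧ 0 < Real.sin (1/(q.1^2+q.2^2))} := by
  have : {q : ℝ × ℝ | q ≠ 0 ∧ 0 < Real.sin (1/(q.1^2+q.2^2))} =
      {(0 : ℝ × ℝ)}ᶜ ∩ (fun q : ℝ × ℝ => Real.sin (1/(q.1^2+q.2^2))) ⁻¹' (Set.Ioi 0) := by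
    ext q; simp [Set.mem_setOf_eq]
  rw [this]
  exact beta_contOn.isOpen_inter_preimage isOpen_compl_singleton isOpen_Ioi

private lemma beta_open_neg :
    IsOpen {q : ℝ × ℝ | q ≠ 0 ∧ Real.sin (1/(q.1^2+q.2^2)) < 0} := by
  have : {q : ℝ × ℝ | q ≠ 0 ∧ Real.sin (1/(q.1^2+q.2^2)) < 0} =
      {(0 : ℝ × ℝ)}ᶜ ∩ (fun q : ℝ × ℝ => Real.sin (1/(q.1^2+q.2^2))) ⁻¹' (Set.Iio 0) := by
    ext q; simp [Set.mem_setOf_eq]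
  rw [this]
  exact beta_contOn.isOpen_inter_preimage isOpen_compl_singleton isOpen_Iio

private lemma beta_lo_pm (p : ℝ × ℝ) :
    (if p = 0 then (-1 : EReal) else if Real.sin (1 / (p.1 ^ 2 + p.2 ^ 2)) ≤ 0 then -1 else 1)
      = -1 ∨
    (if p = 0 then (-1 : EReal) else if Real.sin (1 / (p.1 ^ 2 + p.2 ^ 2)) ≤ 0 then -1 else 1)
      = 1 := by
  split_ifs <;> simp

private lemma beta_hi_pm (p : ℝ × ℝ) :
    (if p = 0 then (1 : EReal) else if Real.sin (1 / (p.1 ^ 2 + p.2 ^ 2)) < 0 then -1 else 1)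
      = -1 ∨
    (if p = 0 then (1 : EReal) else if Real.sin (1 / (p.1 ^ 2 + p.2 ^ 2)) < 0 then -1 else 1)
      = 1 := by
  split_ifs <;> simp

/-- Example A2: the interval-valued function β on ℝ², given by
β(x, y) = α(sin(1/(x² + y²))) for (x, y) ≠ (0, 0) and β(0, 0) = [−1, 1],
is Hausdorff-continuous. -/
theorem beta_hCont :
    IsHCont
      (fun p : ℝ × ℝ =>
        if p = 0 then (-1 : EReal)
        else if Real.sin (1 / (p.1 ^ 2 + p.2 ^ 2)) ≤ 0 then -1 else 1)
      (fun p : ℝ × ℝ =>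
        if p = 0 then (1 : EReal)
        else if Real.sin (1 / (p.1 ^ 2 + p.2 ^ 2)) < 0 then -1 else 1) := by
  set lo : ℝ × ℝ → EReal := fun p =>
    if p = 0 then (-1 : EReal)
    else if Real.sin (1 / (p.1 ^ 2 + p.2 ^ 2)) ≤ 0 then -1 else 1 with hlodef
  set hi : ℝ × ℝ → EReal := fun p =>
    if p = 0 then (1 : EReal)
    else if Real.sin (1 / (p.1 ^ 2 + p.2 ^ 2)) < 0 then -1 else 1 with hhidef
  have lo_pm : ∀ p, lo p = -1 ∨ lo p = 1 := beta_lo_pm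
  have hi_pm : ∀ p, hi p = -1 ∨ hi p = 1 := beta_hi_pm
  have lo_ge : ∀ p, (-1 : EReal) ≤ lo p := by
    intro p; rcases lo_pm p with h | h <;> rw [h]
    exact beta_ele
  have lo_le : ∀ p, lo p ≤ 1 := by
    intro p; rcases lo_pm p with h | h <;> rw [h]
    exact beta_ele
  have hi_ge : ∀ p, (-1 : EReal) ≤ hi p := by
    intro p; rcases hi_pm p with h | h <;> rw [h]
    exact beta_ele
  have hi_le : ∀ p, hi p ≤ 1 := by
    intro p; rcases hi_pm p with h | h <;> rw [h]
    exact beta_ele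
  have lo_pos : ∀ p : ℝ × ℝ, p ≠ 0 → 0 < Real.sin (1/(p.1^2+p.2^2)) → lo p = 1 := by
    intro p h1 h2
    rw [hlodef]
    simp only [if_neg h1, if_neg (not_le.mpr h2)]
  have hi_neg : ∀ p : ℝ × ℝ, p ≠ 0 → Real.sin (1/(p.1^2+p.2^2)) < 0 → hi p = -1 := by
    intro p h1 h2
    rw [hhidef]
    simp only [if_neg h1, if_pos h2]
  have lo_deg : ∀ p : ℝ × ℝ, (p = 0 ∨ Real.sin (1/(p.1^2+p.2^2)) = 0) → lo p = -1 := by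
    intro p h
    rw [hlodef]
    rcases h with rfl | h
    · simp
    · by_cases h1 : p = 0
      · simp [h1]
      · simp only [if_neg h1, if_pos h.le]
  have hi_deg : ∀ p : ℝ × ℝ, (p = 0 ∨ Real.sin (1/(p.1^2+p.2^2)) = 0) → hi p = 1 := by
    intro p h
    rw [hhidef]
    rcases h with rfl | h
    · simp
    · by_cases h1 : p = 0
      · simp [h1]
      · simp only [if_neg h1, if_neg (not_lt.mpr h.ge)]
  have lo_eq_hi : ∀ p : ℝ × ℝ, p ≠ 0 → Real.sin (1/(p.1^2+p.2^2)) ≠ 0 → lo p = hi p := by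
    intro p h1 h2
    rcases lt_or_gt_of_ne h2 with h | h
    · rw [hi_neg p h1 h, hlodef]; simp only [if_neg h1, if_pos h.le]
    · rw [lo_pos p h1 h, hhidef]; simp only [if_neg h1,
        if_neg (not_lt.mpr h.le)]
  have hscont : IsSCont lo hi := by
    refine ⟨?_, ?_, ?_⟩
    · intro p
      by_cases h1 : p = 0
      · subst h1
        rw [lo_deg 0 (Or.inl rfl), hi_deg 0 (Or.inl rfl)]
        exact beta_ele
      · by_cases h2 : Real.sin (1/(p.1^2+p.2^2)) = 0
        · rw [lo_deg p (Or.inr h2), hi_deg p (Or.inr h2)]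
          exact beta_ele
        · exact (lo_eq_hi p h1 h2).le
    · funext x
      apply le_antisymm
      · exact iSup₂_le fun V hV => iInf₂_le x (mem_of_mem_nhds hV)
      · by_cases hx : x ≠ 0 ∧ 0 < Real.sin (1/(x.1^2+x.2^2))
        · rw [lo_pos x hx.1 hx.2]
          refine le_iSup₂_of_le {q : ℝ × ℝ | q ≠ 0 ∧ 0 < Real.sin (1/(q.1^2+q.2^2))}
            (beta_open_pos.mem_nhds hx) ?_
          exact le_iInf₂ fun y hy => (lo_pos y hy.1 hy.2).ge
        · have hlo : lo x = -1 := by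
            by_cases h1 : x = 0
            · exact lo_deg x (Or.inl h1)
            · have h2 : Real.sin (1/(x.1^2+x.2^2)) ≤ 0 := by
                by_contra h2
                exact hx ⟨h1, not_le.mp h2⟩
              rw [hlodef]; simp only [if_neg h1, if_pos h2]
          rw [hlo]
          refine le_iSup₂_of_le Set.univ Filter.univ_mem ?_
          exact le_iInf₂ fun y _ => lo_ge y
    · funext x
      apply le_antisymm
      · by_cases hx : x ≠ 0 ∧ Real.sin (1/(x.1^2+x.2^2)) < 0
        · rw [hi_neg x hx.1 hx.2]
          refine iInf₂_le_of_le {q : ℝ × ℝ | q ≠ 0 ∧ Real.sin (1/(q.1^2+q.2^2)) < 0}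
            (beta_open_neg.mem_nhds hx) ?_
          exact iSup₂_le fun y hy => (hi_neg y hy.1 hy.2).le
        · have hhi : hi x = 1 := by
            by_cases h1 : x = 0
            · exact hi_deg x (Or.inl h1)
            · have h2 : ¬ Real.sin (1/(x.1^2+x.2^2)) < 0 := fun h2 => hx ⟨h1, h2⟩
              rw [hhidef]; simp only [if_neg h1, if_neg h2]
          rw [hhi]
          refine iInf₂_le_of_le Set.univ Filter.univ_mem ?_
          exact iSup₂_le fun y _ => hi_le y
      · exact le_iInf₂ fun V hV => le_iSup₂_of_le x (mem_of_mem_nhds hV) le_rfl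
  refine ⟨hscont, ?_⟩
  intro glo ghi hg hlog hghi
  obtain ⟨hg1, hg2, hg3⟩ := hg
  constructor
  · funext p
    by_cases hcase : p = 0 ∨ Real.sin (1/(p.1^2+p.2^2)) = 0
    · rw [lo_deg p hcase]
      refine le_antisymm ?_ (by rw [← lo_deg p hcase]; exact hlog p)
      by_contra h
      push_neg at h
      have h' : (-1 : EReal) < lowerBaire glo p := by rw [hg2]; exact h
      simp only [lowerBaire, lt_iSup_iff] at h'
      obtain ⟨V, hV, hinf⟩ := h'
      obtain ⟨q, hqV, hq0, hneg⟩ := (beta_dense_signs p hcase hV).2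
      have h5 : glo q ≤ -1 := by
        calc glo q ≤ ghi q := hg1 q
        _ ≤ hi q := hghi q
        _ = -1 := hi_neg q hq0 hneg
      have h6 : (-1 : EReal) < glo q := lt_of_lt_of_le hinf (iInf₂_le q hqV)
      exact h6.not_ge h5
    · push_neg at hcase
      have heq : lo p = hi p := lo_eq_hi p hcase.1 hcase.2
      refine le_antisymm ?_ (hlog p)
      calc glo p ≤ ghi p := hg1 p
      _ ≤ hi p := hghi p
      _ = lo p := heq.symm
  · funext p
    by_cases hcase : p = 0 ∨ Real.sin (1/(p.1^2+p.2^2)) = 0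
    · rw [hi_deg p hcase]
      refine le_antisymm (by rw [← hi_deg p hcase]; exact hghi p) ?_
      by_contra h
      push_neg at h
      have h' : upperBaire ghi p < 1 := by rw [hg3]; exact h
      simp only [upperBaire, iInf_lt_iff] at h'
      obtain ⟨V, hV, hsup⟩ := h'
      obtain ⟨q, hqV, hq0, hpos⟩ := (beta_dense_signs p hcase hV).1
      have h5 : (1 : EReal) ≤ ghi q := by
        calc (1 : EReal) = lo q := (lo_pos q hq0 hpos).symm
        _ ≤ glo q := hlog q
        _ ≤ ghi q := hg1 q
      have h6 : ghi q < 1 := lt_of_le_of_lt (le_iSup₂_of_le q hqV le_rfl) hsup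
      exact h6.not_ge h5
    · push_neg at hcase
      have heq : lo p = hi p := lo_eq_hi p hcase.1 hcase.2
      refine le_antisymm (hghi p) ?_
      calc hi p = lo p := heq.symm
      _ ≤ glo p := hlog p
      _ ≤ ghi p := hg1 p
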